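/- Let M > 0, q an integer, and let r_1^c, r_2^c ∈ [0, M) with 3M/4 < r_2^c − r_1^c < M. Let τ < M/8 and let Δ, ε be reals with |Δ| ≤ τ, |ε| ≤ τ. If r̃ = M·q + r_2^c + Δ and ω̄ = r_1^c + ε, then [ (r̃ − ω̄)/M ] = q + 1; if instead ω̄' = r_2^c − M + ε then [ (r̃ − ω̄')/M ] = q + 1 as well. -/

import Mathlib

lemma rnd_eq (rnd : ℝ → ℤ) (hrnd : ∀ z : ℝ, -(1/2) ≤ z - rnd z ∧ z - rnd z < 1/2)
    (z : ℝ) (n : ℤ) (hlo : -(1/2) ≤ z - n) (hhi : z - n < 1/2) : rnd z = n := by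
  obtain ⟨hlo', hhi'⟩ := hrnd z
  have h : |(rnd z : ℝ) - n| < 1 := by
    rw [abs_lt]; constructor <;> linarith
  have h2 : |(rnd z : ℤ) - n| < 1 := by
    exact_mod_cast (by push_cast; exact h : |((rnd z - n : ℤ) : ℝ)| < 1)
  rw [abs_lt] at h2; omega

/-- off-by-one quotient recovery in the wrap-around case. -/
theorem stmt_12 (M τ : ℝ) (hM : 0 < M) (q : ℤ) (r1 r2 Δ ε rt ω ω' : ℝ)
    (h1 : 0 ≤ r1) (h1' : r1 < M) (h2 : 0 ≤ r2) (h2' : r2 < M)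
    (hsep : 3 * M / 4 < r2 - r1) (hsep' : r2 - r1 < M)
    (hτ : τ < M / 8) (hΔ : |Δ| ≤ τ) (hε : |ε| ≤ τ)
    (rnd : ℝ → ℤ) (hrnd : ∀ z : ℝ, -(1/2) ≤ z - rnd z ∧ z - rnd z < 1/2)
    (hr : rt = M * q + r2 + Δ) (hω : ω = r1 + ε) (hω' : ω' = r2 - M + ε) :
    rnd ((rt - ω) / M) = q + 1 ∧ rnd ((rt - ω') / M) = q + 1 := by
  obtain ⟨hΔ1, hΔ2⟩ := abs_le.mp hΔ
  obtain ⟨hε1, hε2⟩ := abs_le.mp hε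
  have hM' : M ≠ 0 := ne_of_gt hM
  have e1 : (rt - ω) / M - ((q : ℝ) + 1) = (r2 - r1 + Δ - ε - M) / M := by
    field_simp [hr, hω]; rw [hr, hω]; ring
  have e2 : (rt - ω') / M - ((q : ℝ) + 1) = (Δ - ε) / M := by
    field_simp [hr, hω']; rw [hr, hω']; ring
  constructor
  · apply rnd_eq rnd hrnd
    · push_cast; rw [show -(1/2 : ℝ) ≤ (rt - ω) / M - ((q:ℝ)+1) ↔
        -(1/2 : ℝ) ≤ (r2 - r1 + Δ - ε - M) / M from by rw [e1],
        le_div_iff₀ hM]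
      nlinarith
    · push_cast; rw [show (rt - ω) / M - ((q:ℝ)+1) < 1/2 ↔
        (r2 - r1 + Δ - ε - M) / M < 1/2 from by rw [e1],
        div_lt_iff₀ hM]
      nlinarith
  · apply rnd_eq rnd hrnd
    · push_cast; rw [show -(1/2 : ℝ) ≤ (rt - ω') / M - ((q:ℝ)+1) ↔
        -(1/2 : ℝ) ≤ (Δ - ε) / M from by rw [e2],
        le_div_iff₀ hM]
      nlinarith
    · push_cast; rw [show (rt - ω') / M - ((q:ℝ)+1) < 1/2 ↔
        (Δ - ε) / M < 1/2 from by rw [e2],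
        div_lt_iff₀ hM]
      nlinarith
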